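/- Let A and A' be affine point sets in general position on S² with |A| = |A'|, and let p ∈ A be an extreme point of A. For any p' ∈ A' there is at most one orientation preserving bijection f : A → A' with f(p) = p'; if such f exists, then p' is extreme in A'. -/

import Mathlib

open scoped RealInnerProductSpace

noncomputable section

abbrev E3 := EuclideanSpace ℝ (Fin 3)

/-- Determinant of the 3×3 matrix whose rows are `p`, `q`, `r`. -/
def det3 (p q r : E3) : ℝ := Matrix.det (Matrix.of ![fun i => p i, fun i => q i, fun i => r i])

/-- The orientation `sgn(p,q,r)` of a triple of points: the sign of `det3 p q r`. -/
def sgn3 (p q r : E3) : ℝ := Real.sign (det3 p q r)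

/-- An affine set: a finite subset of the unit sphere contained in an open hemisphere. -/
def IsAffineSet (A : Set E3) : Prop :=
  A.Finite ∧ A ⊆ Metric.sphere (0 : E3) 1 ∧ ∃ v : E3, ∀ p ∈ A, 0 < ⟪v, p⟫

/-- General position for an affine set: no three of its points are coplanar with the origin. -/
def GenPos (A : Set E3) : Prop :=
  ∀ p ∈ A, ∀ q ∈ A, ∀ r ∈ A, p ≠ q → p ≠ r → q ≠ r → det3 p q r ≠ 0

/-- `p` is extreme in `A`: some great circle strictly separates `p` from `A \ {p}`. -/
def IsExtremePt (p : E3) (A : Set E3) : Prop :=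
  ∃ v : E3, 0 < ⟪v, p⟫ ∧ ∀ q ∈ A, q ≠ p → ⟪v, q⟫ < 0

/-- `f` preserves orientations on `S`. -/
def OrientationPreservingOn (f : E3 → E3) (S : Set E3) : Prop :=
  ∀ p ∈ S, ∀ q ∈ S, ∀ r ∈ S, sgn3 (f p) (f q) (f r) = sgn3 p q r

/- ### Auxiliary lemmas -/

lemma inner3 (x y : E3) : ⟪x, y⟫ = x 0 * y 0 + x 1 * y 1 + x 2 * y 2 := by
  simp [PiLp.inner_apply, Fin.sum_univ_three, RCLike.inner_apply]; ring

lemma det3_eq (p q r : E3) :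
    det3 p q r = p 0 * (q 1 * r 2 - q 2 * r 1) - p 1 * (q 0 * r 2 - q 2 * r 0)
      + p 2 * (q 0 * r 1 - q 1 * r 0) := by
  simp [det3, Matrix.det_fin_three]; ring

lemma det3_swap23 (p q r : E3) : det3 p q r = -det3 p r q := by
  rw [det3_eq, det3_eq]; ring

lemma det3_self23 (p q : E3) : det3 p q q = 0 := by
  rw [det3_eq]; ring

lemma det3_self13 (p q : E3) : det3 p q p = 0 := by
  rw [det3_eq]; ring

/-- Cramer-type identity. -/
lemma cramer_inner (w p q s r : E3) :
    det3 p q s * ⟪w, r⟫ =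
      det3 r q s * ⟪w, p⟫ + det3 p r s * ⟪w, q⟫ + det3 p q r * ⟪w, s⟫ := by
  rw [inner3, inner3, inner3, inner3, det3_eq, det3_eq, det3_eq, det3_eq]; ring

/-- Transitivity of the orientation order around an extreme point of a hemisphere set. -/
lemma det_trans (u v p q r s : E3)
    (hup : 0 < ⟪u, p⟫) (huq : 0 < ⟪u, q⟫) (hur : 0 < ⟪u, r⟫) (hus : 0 < ⟪u, s⟫)
    (hvp : 0 < ⟪v, p⟫) (hvq : ⟪v, q⟫ < 0) (hvr : ⟪v, r⟫ < 0) (hvs : ⟪v, s⟫ < 0)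
    (hG : 0 < det3 p q r) (hF : 0 < det3 p r s) (hD : det3 p q s ≠ 0) :
    0 < det3 p q s := by
  have Iv := cramer_inner v p q s r
  have Iu := cramer_inner u p q s r
  have key : det3 p q s * (⟪v, r⟫ * ⟪u, p⟫ - ⟪u, r⟫ * ⟪v, p⟫)
      = det3 p r s * (⟪v, q⟫ * ⟪u, p⟫ - ⟪u, q⟫ * ⟪v, p⟫)
      + det3 p q r * (⟪v, s⟫ * ⟪u, p⟫ - ⟪u, s⟫ * ⟪v, p⟫) := by
    linear_combination ⟪u, p⟫ * Iv - ⟪v, p⟫ * Iu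
  have hX : ⟪v, r⟫ * ⟪u, p⟫ - ⟪u, r⟫ * ⟪v, p⟫ < 0 := by
    nlinarith [mul_pos hur hvp, mul_neg_of_neg_of_pos hvr hup]
  have hY : ⟪v, q⟫ * ⟪u, p⟫ - ⟪u, q⟫ * ⟪v, p⟫ < 0 := by
    nlinarith [mul_pos huq hvp, mul_neg_of_neg_of_pos hvq hup]
  have hZ : ⟪v, s⟫ * ⟪u, p⟫ - ⟪u, s⟫ * ⟪v, p⟫ < 0 := by
    nlinarith [mul_pos hus hvp, mul_neg_of_neg_of_pos hvs hup]
  rcases hD.lt_or_gt with h | h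
  · exfalso
    have h1 : 0 < det3 p q s * (⟪v, r⟫ * ⟪u, p⟫ - ⟪u, r⟫ * ⟪v, p⟫) :=
      mul_pos_of_neg_of_neg h hX
    have h2 : det3 p r s * (⟪v, q⟫ * ⟪u, p⟫ - ⟪u, q⟫ * ⟪v, p⟫) < 0 :=
      mul_neg_of_pos_of_neg hF hY
    have h3 : det3 p q r * (⟪v, s⟫ * ⟪u, p⟫ - ⟪u, s⟫ * ⟪v, p⟫) < 0 :=
      mul_neg_of_pos_of_neg hG hZ
    linarith
  · exact h

lemma sign_pos_iff {a b : ℝ} (ha : a ≠ 0) (h : Real.sign a = Real.sign b) :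
    0 < a ↔ 0 < b := by
  constructor
  · intro ha'
    by_contra hb
    rw [Real.sign_of_pos ha'] at h
    rcases lt_trichotomy b 0 with h2 | h2 | h2
    · rw [Real.sign_of_neg h2] at h; norm_num at h
    · rw [h2, Real.sign_zero] at h; norm_num at h
    · exact hb h2
  · intro hb
    rcases ha.lt_or_gt with h1 | h1
    · rw [Real.sign_of_neg h1, Real.sign_of_pos hb] at h; norm_num at h
    · exact h1

/- ### Rank arguments for strict total orders on finite sets -/

/-- Rank of `x` in `S` w.r.t. relation `r`. -/
def rnk (S : Set E3) (r : E3 → E3 → Prop) (x : E3) : ℕ := {y ∈ S | r y x}.ncard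

lemma rnk_lt {S : Set E3} {r : E3 → E3 → Prop} (hS : S.Finite)
    (hirr : ∀ x ∈ S, ¬ r x x)
    (htr : ∀ x ∈ S, ∀ y ∈ S, ∀ z ∈ S, r x y → r y z → r x z)
    {x y : E3} (hx : x ∈ S) (hy : y ∈ S) (hxy : r x y) :
    rnk S r x < rnk S r y := by
  have hsub1 : {z ∈ S | r z x} ⊆ {z ∈ S | r z y} := by
    rintro z ⟨hz1, hz2⟩
    exact ⟨hz1, htr z hz1 x hx y hy hz2 hxy⟩
  have hsub2 : insert x {z ∈ S | r z x} ⊆ {z ∈ S | r z y} := by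
    intro z hz
    rcases Set.mem_insert_iff.1 hz with rfl | hz
    · exact ⟨hx, hxy⟩
    · exact hsub1 hz
  have hfin : {z ∈ S | r z x}.Finite := hS.subset (Set.sep_subset _ _)
  have hxnot : x ∉ {z ∈ S | r z x} := fun h => hirr x hx h.2
  calc rnk S r x < (insert x {z ∈ S | r z x}).ncard := by
        rw [Set.ncard_insert_of_notMem hxnot hfin]; exact Nat.lt_succ_self _
    _ ≤ rnk S r y := Set.ncard_le_ncard hsub2 (hS.subset (Set.sep_subset _ _))

lemma exists_bot {S : Set E3} {r : E3 → E3 → Prop} (hS : S.Finite) (hne : S.Nonempty)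
    (hirr : ∀ x ∈ S, ¬ r x x)
    (htr : ∀ x ∈ S, ∀ y ∈ S, ∀ z ∈ S, r x y → r y z → r x z)
    (htot : ∀ x ∈ S, ∀ y ∈ S, x ≠ y → r x y ∨ r y x) :
    ∃ m ∈ S, ∀ x ∈ S, x ≠ m → r m x := by
  obtain ⟨m, hm, hmin⟩ := Set.exists_min_image S (rnk S r) hS hne
  refine ⟨m, hm, fun x hx hxm => ?_⟩
  rcases htot m hm x hx (Ne.symm hxm) with h | h
  · exact h
  · exact absurd (rnk_lt hS hirr htr hx hm h) (not_lt.2 (hmin x hx))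

lemma orderIso_id {S : Set E3} {r : E3 → E3 → Prop} (hS : S.Finite)
    (hirr : ∀ x ∈ S, ¬ r x x)
    (htr : ∀ x ∈ S, ∀ y ∈ S, ∀ z ∈ S, r x y → r y z → r x z)
    (htot : ∀ x ∈ S, ∀ y ∈ S, x ≠ y → r x y ∨ r y x)
    (h : E3 → E3) (hmaps : Set.MapsTo h S S) (hinj : Set.InjOn h S)
    (hsurj : Set.SurjOn h S S)
    (hpres : ∀ x ∈ S, ∀ y ∈ S, (r x y ↔ r (h x) (h y))) :
    ∀ x ∈ S, h x = x := by
  intro x hx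
  have him : {y ∈ S | r y (h x)} = h '' {y ∈ S | r y x} := by
    ext y
    constructor
    · rintro ⟨hyS, hyr⟩
      obtain ⟨z, hz, rfl⟩ := hsurj hyS
      exact ⟨z, ⟨hz, (hpres z hz x hx).2 hyr⟩, rfl⟩
    · rintro ⟨z, ⟨hz, hzr⟩, rfl⟩
      exact ⟨hmaps hz, (hpres z hz x hx).1 hzr⟩
  have hcard : rnk S r (h x) = rnk S r x := by
    rw [rnk, rnk, him, Set.ncard_image_of_injOn (hinj.mono (Set.sep_subset _ _))]
  by_contra hne
  rcases htot (h x) (hmaps hx) x hx hne with hr | hr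
  · exact absurd (rnk_lt hS hirr htr (hmaps hx) hx hr) (by rw [hcard]; exact lt_irrefl _)
  · exact absurd (rnk_lt hS hirr htr hx (hmaps hx) hr) (by rw [hcard]; exact lt_irrefl _)

/- ### Cross product -/

def cross3 (x y : E3) : E3 :=
  (WithLp.equiv 2 (Fin 3 → ℝ)).symm
    ![x 1 * y 2 - x 2 * y 1, x 2 * y 0 - x 0 * y 2, x 0 * y 1 - x 1 * y 0]

lemma inner_cross3 (x y z : E3) : ⟪cross3 x y, z⟫ = det3 x y z := by
  rw [inner3, det3_eq]
  simp [cross3]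
  ring

/- ### Main theorem -/

theorem stmt6 (A A' : Set E3) (hA : IsAffineSet A) (hA' : IsAffineSet A')
    (hgp : GenPos A) (hgp' : GenPos A') (hcard : A.ncard = A'.ncard)
    (p : E3) (hp : p ∈ A) (hpe : IsExtremePt p A) (p' : E3) (hp' : p' ∈ A') :
    (∀ f g : E3 → E3, Set.BijOn f A A' → OrientationPreservingOn f A →
      Set.BijOn g A A' → OrientationPreservingOn g A →
      f p = p' → g p = p' → Set.EqOn f g A) ∧
    (∀ f : E3 → E3, Set.BijOn f A A' → OrientationPreservingOn f A →
      f p = p' → IsExtremePt p' A') := by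
  obtain ⟨hAfin, hAsph, u, hu⟩ := hA
  obtain ⟨hA'fin, hA'sph, u', hu'⟩ := hA'
  obtain ⟨v, hvp, hv⟩ := hpe
  set B : Set E3 := A \ {p} with hBdef
  have hmemB : ∀ x, x ∈ B ↔ x ∈ A ∧ x ≠ p := by
    intro x; simp [hBdef]
  have hBfin : B.Finite := hAfin.subset Set.diff_subset
  -- the orientation order around p
  set rel : E3 → E3 → Prop := fun x y => 0 < det3 p x y with hreldef
  have hirr : ∀ x ∈ B, ¬ rel x x := by
    intro x _ h
    rw [hreldef] at h
    simp only [det3_self23] at h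
    exact lt_irrefl 0 h
  have htot : ∀ x ∈ B, ∀ y ∈ B, x ≠ y → rel x y ∨ rel y x := by
    intro x hx y hy hxy
    obtain ⟨hxA, hxp⟩ := (hmemB x).1 hx
    obtain ⟨hyA, hyp⟩ := (hmemB y).1 hy
    have hne := hgp p hp x hxA y hyA (Ne.symm hxp) (Ne.symm hyp) hxy
    rcases hne.lt_or_gt with h | h
    · right
      show 0 < det3 p y x
      rw [det3_swap23]; linarith
    · left; exact h
  have htr : ∀ x ∈ B, ∀ y ∈ B, ∀ z ∈ B, rel x y → rel y z → rel x z := by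
    intro x hx y hy z hz hxy hyz
    obtain ⟨hxA, hxp⟩ := (hmemB x).1 hx
    obtain ⟨hyA, hyp⟩ := (hmemB y).1 hy
    obtain ⟨hzA, hzp⟩ := (hmemB z).1 hz
    by_cases hxz : x = z
    · exfalso
      subst hxz
      have : (0:ℝ) < det3 p y x := hyz
      rw [det3_swap23] at this
      have : (0:ℝ) < det3 p x y := hxy
      linarith
    · exact det_trans u v p x y z (hu p hp) (hu x hxA) (hu y hyA) (hu z hzA)
        hvp (hv x hxA hxp) (hv y hyA hyp) (hv z hzA hzp) hxy hyz
        (hgp p hp x hxA z hzA (Ne.symm hxp) (Ne.symm hzp) hxz)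
  have : Nonempty E3 := ⟨0⟩
  constructor
  · -- uniqueness
    intro f g hf hof hg hog hfp hgpeq
    set gi := Function.invFunOn g A with hgi
    have hinv : Set.InvOn gi g A A' := hg.invOn_invFunOn
    have hgb : Set.BijOn gi A' A := Set.BijOn.symm hinv.symm hg
    set h : E3 → E3 := gi ∘ f with hhdef
    have hhb : Set.BijOn h A A := hgb.comp hf
    have hhp : h p = p := by
      show gi (f p) = p
      rw [hfp, ← hgpeq]
      exact hinv.1 hp
    have hgof : ∀ x ∈ A, g (h x) = f x := fun x hx => hinv.2 (hf.mapsTo hx)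
    have hhOP : ∀ a ∈ A, ∀ b ∈ A, ∀ c ∈ A, sgn3 (h a) (h b) (h c) = sgn3 a b c := by
      intro a ha b hb c hc
      have h1 := hog (h a) (hhb.mapsTo ha) (h b) (hhb.mapsTo hb) (h c) (hhb.mapsTo hc)
      rw [hgof a ha, hgof b hb, hgof c hc] at h1
      rw [← h1, hof a ha b hb c hc]
    have hhB : Set.MapsTo h B B := by
      intro x hx
      obtain ⟨hxA, hxp⟩ := (hmemB x).1 hx
      refine (hmemB (h x)).2 ⟨hhb.mapsTo hxA, fun hcon => hxp ?_⟩
      exact hhb.injOn hxA hp (by rw [hcon, hhp])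
    have hhsurjB : Set.SurjOn h B B := by
      intro x hx
      obtain ⟨hxA, hxp⟩ := (hmemB x).1 hx
      obtain ⟨y, hy, hyx⟩ := hhb.surjOn hxA
      refine ⟨y, (hmemB y).2 ⟨hy, fun hcon => hxp ?_⟩, hyx⟩
      rw [← hyx, hcon, hhp]
    have hpres : ∀ x ∈ B, ∀ y ∈ B, (rel x y ↔ rel (h x) (h y)) := by
      intro x hx y hy
      obtain ⟨hxA, hxp⟩ := (hmemB x).1 hx
      obtain ⟨hyA, hyp⟩ := (hmemB y).1 hy
      by_cases hxy : x = y
      · subst hxy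
        constructor
        · intro hcon; exact absurd hcon (hirr x hx)
        · intro hcon
          exfalso
          have : (0:ℝ) < det3 p (h x) (h x) := hcon
          rw [det3_self23] at this
          exact lt_irrefl 0 this
      · have hs := hhOP p hp x hxA y hyA
        rw [hhp] at hs
        have hne := hgp p hp x hxA y hyA (Ne.symm hxp) (Ne.symm hyp) hxy
        exact sign_pos_iff hne hs.symm
    have hid : ∀ x ∈ B, h x = x :=
      orderIso_id hBfin hirr htr htot h hhB (hhb.injOn.mono Set.diff_subset) hhsurjB hpres
    intro x hx
    by_cases hxp : x = p
    · subst hxp; rw [hfp, hgpeq]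
    · have hxB : x ∈ B := (hmemB x).2 ⟨hx, hxp⟩
      have h1 : g (h x) = f x := hgof x hx
      rw [hid x hxB] at h1
      exact h1.symm
  · -- extremeness of p'
    intro f hf hof hfp
    set B' : Set E3 := A' \ {p'} with hB'def
    have hmemB' : ∀ x, x ∈ B' ↔ x ∈ A' ∧ x ≠ p' := by
      intro x; simp [hB'def]
    have hB'fin : B'.Finite := hA'fin.subset Set.diff_subset
    set rel' : E3 → E3 → Prop := fun x y => 0 < det3 p' x y with hrel'def
    have hirr' : ∀ x ∈ B', ¬ rel' x x := by
      intro x _ h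
      have : (0:ℝ) < det3 p' x x := h
      rw [det3_self23] at this
      exact lt_irrefl 0 this
    have htot' : ∀ x ∈ B', ∀ y ∈ B', x ≠ y → rel' x y ∨ rel' y x := by
      intro x hx y hy hxy
      obtain ⟨hxA, hxp⟩ := (hmemB' x).1 hx
      obtain ⟨hyA, hyp⟩ := (hmemB' y).1 hy
      have hne := hgp' p' hp' x hxA y hyA (Ne.symm hxp) (Ne.symm hyp) hxy
      rcases hne.lt_or_gt with h | h
      · right
        show 0 < det3 p' y x
        rw [det3_swap23]; linarith
      · left; exact h
    have bridge : ∀ a ∈ A, ∀ b ∈ A, a ≠ p → b ≠ p → a ≠ b →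
        (0 < det3 p a b ↔ 0 < det3 p' (f a) (f b)) := by
      intro a ha b hb hap hbp hab
      have hs : sgn3 (f p) (f a) (f b) = sgn3 p a b := hof p hp a ha b hb
      rw [hfp] at hs
      exact sign_pos_iff (hgp p hp a ha b hb (Ne.symm hap) (Ne.symm hbp) hab) hs.symm
    have hfB : ∀ a ∈ A, a ≠ p → f a ∈ B' := by
      intro a ha hap
      refine (hmemB' (f a)).2 ⟨hf.mapsTo ha, fun hcon => hap ?_⟩
      exact hf.injOn ha hp (by rw [hcon, hfp])
    have htr' : ∀ x ∈ B', ∀ y ∈ B', ∀ z ∈ B', rel' x y → rel' y z → rel' x z := by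
      intro x hx y hy z hz hxy hyz
      by_cases hxz : x = z
      · exfalso
        subst hxz
        have h1 : (0:ℝ) < det3 p' x y := hxy
        have h2 : (0:ℝ) < det3 p' y x := hyz
        rw [det3_swap23] at h2
        linarith
      by_cases hxy' : x = y
      · subst hxy'; exact absurd hxy (hirr' x hx)
      by_cases hyz' : y = z
      · subst hyz'; exact hxy
      obtain ⟨a, haA, rfl⟩ := hf.surjOn ((hmemB' x).1 hx).1
      obtain ⟨b, hbA, rfl⟩ := hf.surjOn ((hmemB' y).1 hy).1
      obtain ⟨c, hcA, rfl⟩ := hf.surjOn ((hmemB' z).1 hz).1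
      have hap : a ≠ p := fun hcon => ((hmemB' (f a)).1 hx).2 (by rw [hcon, hfp])
      have hbp : b ≠ p := fun hcon => ((hmemB' (f b)).1 hy).2 (by rw [hcon, hfp])
      have hcp : c ≠ p := fun hcon => ((hmemB' (f c)).1 hz).2 (by rw [hcon, hfp])
      have hab : a ≠ b := fun hcon => hxy' (by rw [hcon])
      have hbc : b ≠ c := fun hcon => hyz' (by rw [hcon])
      have hac : a ≠ c := fun hcon => hxz (by rw [hcon])
      have hrab : rel a b := (bridge a haA b hbA hap hbp hab).2 hxy
      have hrbc : rel b c := (bridge b hbA c hcA hbp hcp hbc).2 hyz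
      have hrac : rel a c := htr a ((hmemB a).2 ⟨haA, hap⟩) b ((hmemB b).2 ⟨hbA, hbp⟩)
        c ((hmemB c).2 ⟨hcA, hcp⟩) hrab hrbc
      exact (bridge a haA c hcA hap hcp hac).1 hrac
    -- now construct a separating vector
    have hp'n : ‖p'‖ = 1 := by simpa using hA'sph hp'
    have hp'p' : ⟪p', p'⟫ = 1 := by
      rw [real_inner_self_eq_norm_sq, hp'n]; norm_num
    rcases B'.eq_empty_or_nonempty with hBe | hBne
    · refine ⟨p', by rw [hp'p']; norm_num, fun q hq hqp => ?_⟩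
      exfalso
      have : q ∈ B' := (hmemB' q).2 ⟨hq, hqp⟩
      rw [hBe] at this
      exact this
    · obtain ⟨q1, hq1, hq1min⟩ := exists_bot hB'fin hBne hirr' htr' htot'
      have hirr'' : ∀ x ∈ B', ¬ (fun x y => rel' y x) x x := hirr'
      have htr'' : ∀ x ∈ B', ∀ y ∈ B', ∀ z ∈ B',
          (fun x y => rel' y x) x y → (fun x y => rel' y x) y z →
          (fun x y => rel' y x) x z := by
        intro x hx y hy z hz h1 h2
        exact htr' z hz y hy x hx h2 h1
      have htot'' : ∀ x ∈ B', ∀ y ∈ B', x ≠ y →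
          (fun x y => rel' y x) x y ∨ (fun x y => rel' y x) y x := by
        intro x hx y hy hxy
        exact (htot' x hx y hy hxy).symm
      obtain ⟨qm, hqm, hqmmax⟩ := exists_bot (r := fun x y => rel' y x) hB'fin hBne hirr'' htr'' htot''
      obtain ⟨hq1A, hq1p⟩ := (hmemB' q1).1 hq1
      obtain ⟨hqmA, hqmp⟩ := (hmemB' qm).1 hqm
      by_cases hqq : q1 = qm
      · -- B' is the singleton {q1}
        have hsingle : ∀ x ∈ B', x = q1 := by
          intro x hx
          by_contra hxne
          have h1 : rel' q1 x := hq1min x hx hxne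
          have h2 : rel' x qm := hqmmax x hx (fun h => hxne (h.trans hqq.symm))
          rw [← hqq] at h2
          have h2' : (0:ℝ) < det3 p' x q1 := h2
          have h1' : (0:ℝ) < det3 p' q1 x := h1
          rw [det3_swap23] at h2'
          linarith
        have hq1n : ‖q1‖ = 1 := by simpa using hA'sph hq1A
        have hq1q1 : ⟪q1, q1⟫ = 1 := by
          rw [real_inner_self_eq_norm_sq, hq1n]; norm_num
        have hne0 : p' - q1 ≠ 0 := sub_ne_zero.2 (Ne.symm hq1p)
        have hposn : (0:ℝ) < ⟪p' - q1, p' - q1⟫ := by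
          rw [real_inner_self_eq_norm_sq]
          have hn : 0 < ‖p' - q1‖ := norm_pos_iff.2 hne0
          positivity
        have hexp : ⟪p' - q1, p' - q1⟫ = 2 - 2 * ⟪p', q1⟫ := by
          rw [inner_sub_left, inner_sub_right, inner_sub_right, hp'p', hq1q1,
            real_inner_comm p' q1]
          ring
        have hlt1 : ⟪p', q1⟫ < 1 := by rw [hexp] at hposn; linarith
        refine ⟨p' - q1, ?_, ?_⟩
        · rw [inner_sub_left, hp'p', real_inner_comm p' q1]; linarith
        · intro q hq hqp
          have hqB : q ∈ B' := (hmemB' q).2 ⟨hq, hqp⟩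
          rw [hsingle q hqB, inner_sub_left, hq1q1]
          linarith
      · -- wedge case
        have hq1m : rel' q1 qm := hq1min qm hqm (Ne.symm hqq)
        have hq1m' : (0:ℝ) < det3 p' q1 qm := hq1m
        set c : E3 := cross3 p' qm - cross3 p' q1 with hcdef
        have hcinner : ∀ x : E3, ⟪c, x⟫ = det3 p' qm x - det3 p' q1 x := by
          intro x
          rw [hcdef, inner_sub_left, inner_cross3, inner_cross3]
        have hcneg : ∀ x ∈ B', ⟪c, x⟫ < 0 := by
          intro x hx
          rw [hcinner]
          by_cases hx1 : x = q1
          · subst hx1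
            rw [det3_self23, det3_swap23]
            linarith
          by_cases hxm : x = qm
          · subst hxm
            rw [det3_self23]
            linarith
          · have h1 : (0:ℝ) < det3 p' q1 x := hq1min x hx hx1
            have h2 : rel' x qm := hqmmax x hx hxm
            have h2' : (0:ℝ) < det3 p' x qm := h2
            rw [det3_swap23] at h2'
            linarith
        -- choose ε
        have hFne : hB'fin.toFinset.Nonempty := by
          rwa [Set.Finite.toFinset_nonempty]
        set δ : ℝ := hB'fin.toFinset.inf' hFne (fun x => -⟪c, x⟫) with hδdef
        have hδpos : 0 < δ := by
          rw [hδdef, Finset.lt_inf'_iff]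
          intro x hxF
          have hxB : x ∈ B' := hB'fin.mem_toFinset.1 hxF
          linarith [hcneg x hxB]
        have hδle : ∀ x ∈ B', δ ≤ -⟪c, x⟫ := by
          intro x hx
          exact Finset.inf'_le _ (hB'fin.mem_toFinset.2 hx)
        refine ⟨c + (δ / 2) • p', ?_, ?_⟩
        · rw [inner_add_left, real_inner_smul_left, hcinner, det3_self13, det3_self13,
            hp'p']
          linarith
        · intro q hq hqp
          have hqB : q ∈ B' := (hmemB' q).2 ⟨hq, hqp⟩
          have hqn : ‖q‖ = 1 := by simpa using hA'sph hq
          have hCS : ⟪p', q⟫ ≤ 1 := by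
            have := real_inner_le_norm p' q
            rw [hp'n, hqn] at this
            linarith
          rw [inner_add_left, real_inner_smul_left]
          have h1 : δ ≤ -⟪c, q⟫ := hδle q hqB
          have h2 : δ / 2 * ⟪p', q⟫ ≤ δ / 2 := by nlinarith
          linarith [hcneg q hqB]
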